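/- Let 0 < a < b < ∞, let f and g be continuous functions on [a,b] with g(t) > 0 for all t ∈ [a,b], and define F(x) = ∫_a^b f(t)·e^{−xt} dt and G(x) = ∫_a^b g(t)·e^{−xt} dt for x > 0. Suppose there exists t* ∈ (a,b) such that f/g is strictly increasing on [a,t*] and strictly decreasing on [t*,b], and suppose lim_{x→0⁺} ( (F′(x)/G′(x))·G(x) − F(x) ) exists and is negative. Then there exists x* > 0 such that F/G is increasing on (0,x*) and decreasing on (x*,∞). -/

import Mathlib

open Real Filter Set MeasureTheory Topology intervalIntegral

lemma lap_hasDerivAt (a b : ℝ) (hab : a ≤ b) (k : ℝ → ℝ)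
    (hk : ContinuousOn k (Icc a b)) (x : ℝ) :
    HasDerivAt (fun y => ∫ t in a..b, k t * Real.exp (-y*t))
      (∫ t in a..b, (-t * k t) * Real.exp (-x*t)) x := by
  have hsub : uIoc a b ⊆ Icc a b := by
    rw [uIoc_of_le hab]; exact Ioc_subset_Icc_self
  obtain ⟨M, hM⟩ := (isCompact_Icc (a := a) (b := b)).exists_bound_of_continuousOn hk
  set B := |a| + |b| with hB
  have hBt : ∀ t ∈ Icc a b, |t| ≤ B := by
    intro t ht
    rw [abs_le]
    constructor
    · have := neg_abs_le a; linarith [ht.1, abs_nonneg b]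
    · have := le_abs_self b; linarith [ht.2, abs_nonneg a]
  have key := intervalIntegral.hasDerivAt_integral_of_dominated_loc_of_deriv_le
      (F := fun y t => k t * Real.exp (-y*t))
      (F' := fun y t => (-t * k t) * Real.exp (-y*t))
      (x₀ := x) (a := a) (b := b) (μ := volume)
      (bound := fun _ => B * M * Real.exp ((|x|+1) * B))
      (s := Metric.ball x 1) (Metric.ball_mem_nhds x one_pos)
      ?_ ?_ ?_ ?_ ?_ ?_
  · exact key.2
  · refine Eventually.of_forall (fun y => ?_)
    refine ContinuousOn.aestronglyMeasurable ?_ measurableSet_uIoc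
    exact ((hk.mono hsub).mul (Continuous.continuousOn (by continuity)))
  · apply ContinuousOn.intervalIntegrable
    rw [uIcc_of_le hab]
    exact hk.mul (Continuous.continuousOn (by continuity))
  · refine ContinuousOn.aestronglyMeasurable ?_ measurableSet_uIoc
    refine ContinuousOn.mul ?_ (Continuous.continuousOn (by continuity))
    exact (continuous_id.neg.continuousOn).mul (hk.mono hsub)
  · refine Eventually.of_forall (fun t ht => ?_)
    intro y hy
    have ht' : t ∈ Icc a b := hsub ht
    have h1 : |t| ≤ B := hBt t ht'
    have h2 : |k t| ≤ M := by simpa using hM t ht'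
    have h3 : |y| ≤ |x| + 1 := by
      have := abs_sub_abs_le_abs_sub y x
      have : |y - x| < 1 := by simpa [Metric.mem_ball, Real.dist_eq] using hy
      have := abs_sub_abs_le_abs_sub y x
      linarith [abs_sub_abs_le_abs_sub y x]
    have h4 : Real.exp (-y*t) ≤ Real.exp ((|x|+1) * B) := by
      apply Real.exp_le_exp.mpr
      calc -y*t ≤ |(-y)*t| := le_abs_self _
        _ = |y| * |t| := by rw [abs_mul, abs_neg]
        _ ≤ (|x|+1) * B := by
            apply mul_le_mul h3 h1 (abs_nonneg t) (by positivity)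
    have hMt : (0:ℝ) ≤ M := le_trans (abs_nonneg _) h2
    have hBnn : (0:ℝ) ≤ B := by positivity
    calc ‖(-t * k t) * Real.exp (-y*t)‖ = |t| * |k t| * Real.exp (-y*t) := by
          simp [Real.norm_eq_abs, abs_mul, abs_exp, abs_neg]
      _ ≤ B * M * Real.exp ((|x|+1) * B) := by
          apply mul_le_mul (mul_le_mul h1 h2 (abs_nonneg _) hBnn) h4 (Real.exp_pos _).le
          positivity
  · exact intervalIntegrable_const
  · refine Eventually.of_forall (fun t ht => ?_)
    intro y hy
    have h1 : HasDerivAt (fun y : ℝ => -y*t) (-t) y := by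
      simpa using ((hasDerivAt_id y).neg.mul_const t)
    have h3 := (h1.exp).const_mul (k t)
    refine h3.congr_deriv ?_
    ring

lemma lap_integrable (a b : ℝ) (hab : a ≤ b) (k : ℝ → ℝ)
    (hk : ContinuousOn k (Icc a b)) (x : ℝ) :
    IntervalIntegrable (fun t => k t * Real.exp (-x*t)) volume a b := by
  apply ContinuousOn.intervalIntegrable
  rw [uIcc_of_le hab]
  exact hk.mul (Continuous.continuousOn (by continuity))

lemma lap_nonpos (a b : ℝ) (hab : a ≤ b) (k : ℝ → ℝ)
    (hk : ContinuousOn k (Icc a b)) (hneg : ∀ t ∈ Icc a b, k t ≤ 0) (x : ℝ) :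
    (∫ t in a..b, k t * Real.exp (-x*t)) ≤ 0 := by
  have := intervalIntegral.integral_nonneg (f := fun t => -(k t * Real.exp (-x*t))) (μ := volume)
      hab (fun u hu => by
        have h1 := hneg u hu
        have h2 := (Real.exp_pos (-x*u)).le
        simp only [neg_nonneg]
        nlinarith)
  have h2 : (∫ t in a..b, -(k t * Real.exp (-x*t))) = -∫ t in a..b, k t * Real.exp (-x*t) :=
    intervalIntegral.integral_neg
  linarith [this, h2 ▸ this]

lemma shift_deriv (a b c : ℝ) (hab : a ≤ b) (k : ℝ → ℝ)
    (hk : ContinuousOn k (Icc a b)) (x : ℝ) :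
    HasDerivAt (fun y => Real.exp (c*y) * ∫ t in a..b, k t * Real.exp (-y*t))
      (Real.exp (c*x) * ∫ t in a..b, ((c - t) * k t) * Real.exp (-x*t)) x := by
  have h1 := lap_hasDerivAt a b hab k hk x
  have h2 : HasDerivAt (fun y : ℝ => Real.exp (c*y)) (Real.exp (c*x) * c) x := by
    simpa using ((hasDerivAt_id x).const_mul c).exp
  have h3 := h2.mul h1
  refine h3.congr_deriv ?_
  have int1 : IntervalIntegrable (fun t => (c * k t) * Real.exp (-x*t)) volume a b :=
    lap_integrable a b hab _ (continuousOn_const.mul hk) x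
  have int2 : IntervalIntegrable (fun t => (-t * k t) * Real.exp (-x*t)) volume a b :=
    lap_integrable a b hab _ ((continuous_id.neg.continuousOn).mul hk) x
  have heq : (∫ t in a..b, ((c - t) * k t) * Real.exp (-x*t))
      = (∫ t in a..b, (c * k t) * Real.exp (-x*t))
        + ∫ t in a..b, (-t * k t) * Real.exp (-x*t) := by
    rw [← intervalIntegral.integral_add int1 int2]
    congr 1; funext t; ring
  have heq2 : (∫ t in a..b, (c * k t) * Real.exp (-x*t))
      = c * ∫ t in a..b, k t * Real.exp (-x*t) := by
    rw [← intervalIntegral.integral_const_mul]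
    congr 1; funext t; ring
  rw [heq, heq2]; ring

lemma key_lemma (a b : ℝ) (hab : a ≤ b) (h : ℝ → ℝ) (hc : ContinuousOn h (Icc a b))
    (p q : ℝ) (hap : a ≤ p) (hpq : p ≤ q) (hqb : q ≤ b)
    (hneg1 : ∀ t ∈ Ico a p, h t ≤ 0)
    (hmid : ∀ t ∈ Icc p q, 0 ≤ h t)
    (hneg2 : ∀ t ∈ Ioc q b, h t ≤ 0)
    (x1 x2 x3 : ℝ) (h12 : x1 < x2) (h23 : x2 < x3)
    (s1 : 0 < ∫ t in a..b, h t * Real.exp (-x1*t))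
    (s3 : 0 < ∫ t in a..b, h t * Real.exp (-x3*t)) :
    0 < ∫ t in a..b, h t * Real.exp (-x2*t) := by
  set ψ : ℝ → ℝ := fun x => ∫ t in a..b, h t * Real.exp (-x*t) with hψ
  set k1 : ℝ → ℝ := fun t => (q - t) * h t with hk1
  have hk1c : ContinuousOn k1 (Icc a b) :=
    ((continuous_const.sub continuous_id).continuousOn).mul hc
  set ψ1 : ℝ → ℝ := fun x => ∫ t in a..b, k1 t * Real.exp (-x*t) with hψ1
  set k2 : ℝ → ℝ := fun t => (p - t) * k1 t with hk2
  have hk2c : ContinuousOn k2 (Icc a b) :=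
    ((continuous_const.sub continuous_id).continuousOn).mul hk1c
  -- A = exp(q x) ψ x has derivative exp(q x) ψ1 x
  have hA : ∀ x, HasDerivAt (fun y => Real.exp (q*y) * ψ y)
      (Real.exp (q*x) * ψ1 x) x := fun x => shift_deriv a b q hab h hc x
  -- B = exp(p x) ψ1 x has derivative exp(p x) ψ2 x ≤ 0
  have hB : ∀ x, HasDerivAt (fun y => Real.exp (p*y) * ψ1 y)
      (Real.exp (p*x) * ∫ t in a..b, k2 t * Real.exp (-x*t)) x :=
    fun x => shift_deriv a b p hab k1 hk1c x
  have hk2neg : ∀ t ∈ Icc a b, k2 t ≤ 0 := by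
    intro t ht
    rcases lt_or_ge t p with htp | htp
    · have h1 : h t ≤ 0 := hneg1 t ⟨ht.1, htp⟩
      have : (0:ℝ) ≤ (p - t) * (q - t) := by nlinarith
      simp only [hk2, hk1]
      nlinarith
    · rcases le_or_gt t q with htq | htq
      · have h1 : 0 ≤ h t := hmid t ⟨htp, htq⟩
        simp only [hk2, hk1]
        exact mul_nonpos_of_nonpos_of_nonneg (by linarith) (mul_nonneg (by linarith) h1)
      · have h1 : h t ≤ 0 := hneg2 t ⟨htq, ht.2⟩
        simp only [hk2, hk1]
        have : 0 ≤ (q - t) * h t := by nlinarith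
        exact mul_nonpos_of_nonpos_of_nonneg (by linarith) this
  have hψ2 : ∀ x, (∫ t in a..b, k2 t * Real.exp (-x*t)) ≤ 0 :=
    fun x => lap_nonpos a b hab k2 hk2c hk2neg x
  -- B is antitone
  have hBanti : Antitone (fun y => Real.exp (p*y) * ψ1 y) := by
    apply antitone_of_deriv_nonpos
    · intro x; exact (hB x).differentiableAt
    · intro x
      rw [(hB x).deriv]
      have := hψ2 x
      have := (Real.exp_pos (p*x)).le
      nlinarith
  by_cases hsign : ψ1 x2 ≤ 0
  -- then ψ1 ≤ 0 on [x2, x3], so exp(q x) ψ x antitone there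
  · have hψ1neg : ∀ x ∈ Icc x2 x3, ψ1 x ≤ 0 := by
      intro x hx
      have := hBanti hx.1
      have e1 := (Real.exp_pos (p*x2)).le
      have e2 := Real.exp_pos (p*x)
      simp only at this
      nlinarith
    have hanti : AntitoneOn (fun y => Real.exp (q*y) * ψ y) (Icc x2 x3) := by
      apply antitoneOn_of_deriv_nonpos (convex_Icc x2 x3)
      · exact fun x _ => ((hA x).differentiableAt).continuousAt.continuousWithinAt
      · intro x hx
        exact ((hA x).differentiableAt).differentiableWithinAt
      · intro x hx
        rw [interior_Icc] at hx
        rw [(hA x).deriv]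
        have := hψ1neg x ⟨hx.1.le, hx.2.le⟩
        have := (Real.exp_pos (q*x)).le
        nlinarith
    have h32 := hanti (Set.left_mem_Icc.mpr (by linarith)) (Set.right_mem_Icc.mpr (by linarith)) h23.le
    have e2 := Real.exp_pos (q*x2)
    have e3 := Real.exp_pos (q*x3)
    simp only at h32
    nlinarith
  · push_neg at hsign
    have hψ1pos : ∀ x ∈ Icc x1 x2, 0 ≤ ψ1 x := by
      intro x hx
      have := hBanti hx.2
      have e1 := (Real.exp_pos (p*x2)).le
      have e2 := Real.exp_pos (p*x)
      simp only at this
      nlinarith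
    have hmono : MonotoneOn (fun y => Real.exp (q*y) * ψ y) (Icc x1 x2) := by
      apply monotoneOn_of_deriv_nonneg (convex_Icc x1 x2)
      · exact fun x _ => ((hA x).differentiableAt).continuousAt.continuousWithinAt
      · intro x hx
        exact ((hA x).differentiableAt).differentiableWithinAt
      · intro x hx
        rw [interior_Icc] at hx
        rw [(hA x).deriv]
        have := hψ1pos x ⟨hx.1.le, hx.2.le⟩
        positivity
    have h12' := hmono (Set.left_mem_Icc.mpr (by linarith)) (Set.right_mem_Icc.mpr (by linarith)) h12.le
    have e1 := Real.exp_pos (q*x1)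
    have e2 := Real.exp_pos (q*x2)
    simp only at h12'
    nlinarith

lemma int_exp_eval (x : ℝ) (hx : x ≠ 0) (d e : ℝ) :
    ∫ t in d..e, Real.exp (-x*t) = (Real.exp (-x*d) - Real.exp (-x*e))/x := by
  have hder : ∀ t ∈ uIcc d e, HasDerivAt (fun t => -Real.exp (-x*t)/x) (Real.exp (-x*t)) t := by
    intro t _
    have h1 : HasDerivAt (fun t : ℝ => -x*t) (-x) t := by
      simpa using (hasDerivAt_id t).const_mul (-x)
    have h2 := (h1.exp.neg).div_const x
    refine h2.congr_deriv ?_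
    rw [div_eq_iff hx]; ring
  rw [intervalIntegral.integral_eq_sub_of_hasDerivAt hder
    (Continuous.intervalIntegrable (by continuity) _ _)]
  field_simp
  ring

lemma evpos (a b a' a'' : ℝ) (k : ℝ → ℝ) (hk : ContinuousOn k (Icc a b))
    (h1 : a ≤ a') (h2 : a' < a'') (h3 : a'' ≤ b)
    (hnn : ∀ t ∈ Icc a a'', 0 ≤ k t) (hpos : ∀ t ∈ Icc a' a'', 0 < k t) :
    ∀ᶠ x in atTop, 0 < ∫ t in a..b, k t * Real.exp (-x*t) := by
  have haa'' : a ≤ a'' := by linarith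
  have ha''b : a'' ≤ b := h3
  have hab : a ≤ b := by linarith
  obtain ⟨C, hC⟩ := (isCompact_Icc (a := a) (b := b)).exists_bound_of_continuousOn hk
  have hCnn : 0 ≤ C := le_trans (norm_nonneg _) (hC a ⟨le_refl a, hab⟩)
  obtain ⟨t₀, ht₀, hmin⟩ := (isCompact_Icc (a := a') (b := a'')).exists_isMinOn
    ⟨a', Set.left_mem_Icc.mpr h2.le⟩
    (hk.mono (Icc_subset_Icc h1 h3))
  set m := k t₀ with hm
  have hmpos : 0 < m := hpos t₀ ht₀
  set X := max 1 (C/(m*(a''-a')) + 1) with hX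
  filter_upwards [eventually_ge_atTop X] with x hx
  have hx1 : (1:ℝ) ≤ x := le_trans (le_max_left _ _) hx
  have hx0 : (0:ℝ) < x := by linarith
  have hxC : C/(m*(a''-a')) + 1 ≤ x := le_trans (le_max_right _ _) hx
  -- split the integral
  have i1 : IntervalIntegrable (fun t => k t * Real.exp (-x*t)) volume a a'' :=
    lap_integrable a a'' haa'' k (hk.mono (Icc_subset_Icc (le_refl a) h3)) x
  have i1' : IntervalIntegrable (fun t => k t * Real.exp (-x*t)) volume a a' :=
    lap_integrable a a' h1 k (hk.mono (Icc_subset_Icc (le_refl a) (by linarith))) x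
  have i1'' : IntervalIntegrable (fun t => k t * Real.exp (-x*t)) volume a' a'' :=
    lap_integrable a' a'' h2.le k (hk.mono (Icc_subset_Icc h1 h3)) x
  have i2 : IntervalIntegrable (fun t => k t * Real.exp (-x*t)) volume a'' b :=
    lap_integrable a'' b ha''b k (hk.mono (Icc_subset_Icc haa'' (le_refl b))) x
  have hsplit : (∫ t in a..b, k t * Real.exp (-x*t))
      = (∫ t in a..a'', k t * Real.exp (-x*t)) + ∫ t in a''..b, k t * Real.exp (-x*t) :=
    (intervalIntegral.integral_add_adjacent_intervals i1 i2).symm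
  -- lower bound for the head
  have hlow1 : (0:ℝ) ≤ ∫ t in a..a', k t * Real.exp (-x*t) :=
    intervalIntegral.integral_nonneg h1 (fun u hu =>
      mul_nonneg (hnn u ⟨hu.1, by linarith [hu.2]⟩) (Real.exp_pos _).le)
  have hlow2 : m * Real.exp (-x*a'') * (a'' - a') ≤ ∫ t in a'..a'', k t * Real.exp (-x*t) := by
    have hmono := intervalIntegral.integral_mono_on (μ := volume)
      (f := fun _ => m * Real.exp (-x*a'')) h2.le
      (_root_.intervalIntegrable_const) i1''
      (fun t ht => by
        have hk1 : m ≤ k t := hmin ht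
        have he : Real.exp (-x*a'') ≤ Real.exp (-x*t) := by
          apply Real.exp_le_exp.mpr
          nlinarith [ht.2]
        show m * Real.exp (-x*a'') ≤ k t * Real.exp (-x*t)
        exact mul_le_mul hk1 he (Real.exp_pos _).le (le_trans hmpos.le hk1))
    calc m * Real.exp (-x*a'') * (a'' - a')
        = ∫ _t in a'..a'', m * Real.exp (-x*a'') := by
          rw [intervalIntegral.integral_const]; simp; ring
      _ ≤ _ := hmono
  have hhead : m * Real.exp (-x*a'') * (a'' - a') ≤ ∫ t in a..a'', k t * Real.exp (-x*t) := by
    rw [← intervalIntegral.integral_add_adjacent_intervals i1' i1'']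
    linarith
  -- upper bound for the tail
  have htail : |∫ t in a''..b, k t * Real.exp (-x*t)| ≤ C * (Real.exp (-x*a'')/x) := by
    calc |∫ t in a''..b, k t * Real.exp (-x*t)|
        ≤ ∫ t in a''..b, |k t * Real.exp (-x*t)| :=
          intervalIntegral.abs_integral_le_integral_abs ha''b
      _ ≤ ∫ t in a''..b, C * Real.exp (-x*t) := by
          apply intervalIntegral.integral_mono_on ha''b i2.abs
            (lap_integrable a'' b ha''b (fun _ => C) continuousOn_const x)
          intro t ht
          rw [abs_mul, abs_of_nonneg (Real.exp_pos (-x*t)).le]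
          exact mul_le_mul_of_nonneg_right
            (by simpa using hC t ⟨by linarith [ht.1], ht.2⟩) (Real.exp_pos _).le
      _ = C * ((Real.exp (-x*a'') - Real.exp (-x*b))/x) := by
          rw [intervalIntegral.integral_const_mul, int_exp_eval x (ne_of_gt hx0)]
      _ ≤ C * (Real.exp (-x*a'')/x) := by
          gcongr
          linarith [(Real.exp_pos (-x*b)).le]
  -- conclude
  have hx2 : C < x * (m * (a'' - a')) := by
    have hden : 0 < m * (a'' - a') := by nlinarith
    have := (div_le_iff₀ hden).mp (by linarith : C/(m*(a''-a')) ≤ x - 1)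
    nlinarith
  have hexp : 0 < Real.exp (-x*a'') := Real.exp_pos _
  have htail' : -(C * (Real.exp (-x*a'')/x)) ≤ ∫ t in a''..b, k t * Real.exp (-x*t) :=
    neg_le_of_abs_le htail
  rw [hsplit]
  have hfin : C * (Real.exp (-x*a'')/x) < m * Real.exp (-x*a'') * (a'' - a') := by
    rw [div_eq_mul_inv]
    have hxinv : 0 < x⁻¹ := inv_pos.mpr hx0
    have : C * x⁻¹ < m * (a'' - a') := by
      rw [← div_eq_mul_inv, div_lt_iff₀ hx0]
      nlinarith
    nlinarith
  linarith

lemma lap_sub (a b c x : ℝ) (hab : a ≤ b) (f g : ℝ → ℝ)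
    (hf : ContinuousOn f (Icc a b)) (hg : ContinuousOn g (Icc a b)) :
    (∫ t in a..b, (f t - c*g t) * Real.exp (-x*t))
      = (∫ t in a..b, f t * Real.exp (-x*t)) - c * ∫ t in a..b, g t * Real.exp (-x*t) := by
  have e1 : (fun t => (f t - c*g t) * Real.exp (-x*t))
      = fun t => f t * Real.exp (-x*t) - c * (g t * Real.exp (-x*t)) := by
    funext t; ring
  rw [intervalIntegral.integral_congr (g := fun t => f t * Real.exp (-x*t) - c * (g t * Real.exp (-x*t))) (fun t _ => by ring),
    intervalIntegral.integral_sub (lap_integrable a b hab f hf x)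
      ((lap_integrable a b hab g hg x).const_mul c),
    intervalIntegral.integral_const_mul]

lemma quasi (a b : ℝ) (ha : 0 < a) (hab : a < b)
    (f g : ℝ → ℝ)
    (hf : ContinuousOn f (Icc a b)) (hg : ContinuousOn g (Icc a b))
    (hgpos : ∀ t ∈ Icc a b, 0 < g t)
    (F G : ℝ → ℝ)
    (hF : ∀ x, F x = ∫ t in a..b, f t * Real.exp (-x * t))
    (hG : ∀ x, G x = ∫ t in a..b, g t * Real.exp (-x * t))
    (hGpos : ∀ x, 0 < G x)
    (tstar : ℝ) (htstar : tstar ∈ Ioo a b)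
    (hinc : StrictMonoOn (fun t => f t / g t) (Icc a tstar))
    (hdec : StrictAntiOn (fun t => f t / g t) (Icc tstar b))
    (x1 x2 x3 : ℝ) (h12 : x1 < x2) (h23 : x2 < x3) :
    min (F x1 / G x1) (F x3 / G x3) ≤ F x2 / G x2 := by
  have hab' : a ≤ b := hab.le
  have hrc : ContinuousOn (fun t => f t / g t) (Icc a b) :=
    hf.div hg (fun t ht => (hgpos t ht).ne')
  by_contra hcon
  push_neg at hcon
  set c := (F x2 / G x2 + min (F x1 / G x1) (F x3 / G x3))/2 with hc
  have hc2 : F x2 / G x2 < c := by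
    simp only [hc]; linarith
  have hcmin : c < min (F x1 / G x1) (F x3 / G x3) := by
    simp only [hc]; linarith
  have hc1 : c < F x1 / G x1 := lt_of_lt_of_le hcmin (min_le_left _ _)
  have hc3 : c < F x3 / G x3 := lt_of_lt_of_le hcmin (min_le_right _ _)
  have hψ : ∀ x, (∫ t in a..b, (f t - c*g t) * Real.exp (-x*t)) = F x - c * G x := by
    intro x
    rw [lap_sub a b c x hab' f g hf hg, hF, hG]
  have hhc : ContinuousOn (fun t => f t - c*g t) (Icc a b) :=
    hf.sub (continuousOn_const.mul hg)
  have s1 : 0 < ∫ t in a..b, (f t - c*g t) * Real.exp (-x1*t) := by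
    rw [hψ x1]
    have := (lt_div_iff₀ (hGpos x1)).mp hc1
    linarith
  have s3 : 0 < ∫ t in a..b, (f t - c*g t) * Real.exp (-x3*t) := by
    rw [hψ x3]
    have := (lt_div_iff₀ (hGpos x3)).mp hc3
    linarith
  by_cases hcr : f tstar / g tstar < c
  · -- then f - c g < 0 everywhere on (a,b), contradicting s1
    have hneg : 0 < ∫ t in a..b, (c * g t - f t) * Real.exp (-x1*t) := by
      apply intervalIntegral.intervalIntegral_pos_of_pos_on
      · exact lap_integrable a b hab' _ ((continuousOn_const.mul hg).sub hf) x1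
      · intro t ht
        have ht' : t ∈ Icc a b := Ioo_subset_Icc_self ht
        have hrt : f t / g t ≤ f tstar / g tstar := by
          rcases le_or_gt t tstar with h | h
          · exact hinc.monotoneOn ⟨ht.1.le, h⟩ ⟨htstar.1.le, le_refl _⟩ h
          · exact hdec.antitoneOn ⟨le_refl _, htstar.2.le⟩ ⟨h.le, ht'.2⟩ h.le
        have hlt : f t < c * g t := by
          have := (div_lt_iff₀ (hgpos t ht')).mp (lt_of_le_of_lt hrt hcr)
          linarith
        exact mul_pos (by linarith) (Real.exp_pos _)
      · exact hab
    have : (∫ t in a..b, (c * g t - f t) * Real.exp (-x1*t))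
        = -∫ t in a..b, (f t - c*g t) * Real.exp (-x1*t) := by
      rw [← intervalIntegral.integral_neg]
      congr 1; funext t; ring
    rw [this] at hneg
    linarith
  · push_neg at hcr
    -- construct p and q
    set Sp := {t ∈ Icc a tstar | c ≤ f t / g t} with hSp
    have hSpne : Sp.Nonempty := ⟨tstar, ⟨⟨htstar.1.le, le_refl _⟩, hcr⟩⟩
    have hSpcl : IsClosed Sp := by
      have := (hrc.mono (Icc_subset_Icc (le_refl a) htstar.2.le)).preimage_isClosed_of_isClosed
        (t := Ici c) isClosed_Icc isClosed_Ici
      have he : Sp = Icc a tstar ∩ (fun t => f t / g t) ⁻¹' (Ici c) := rfl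
      rw [he]; exact this
    have hSpbdd : BddBelow Sp := ⟨a, fun t ht => ht.1.1⟩
    set p := sInf Sp with hp
    have hpmem : p ∈ Sp := hSpcl.csInf_mem hSpne hSpbdd
    set Sq := {t ∈ Icc tstar b | c ≤ f t / g t} with hSq
    have hSqne : Sq.Nonempty := ⟨tstar, ⟨⟨le_refl _, htstar.2.le⟩, hcr⟩⟩
    have hSqcl : IsClosed Sq := by
      have := (hrc.mono (Icc_subset_Icc htstar.1.le (le_refl b))).preimage_isClosed_of_isClosed
        (t := Ici c) isClosed_Icc isClosed_Ici
      have he : Sq = Icc tstar b ∩ (fun t => f t / g t) ⁻¹' (Ici c) := rfl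
      rw [he]; exact this
    have hSqbdd : BddAbove Sq := ⟨b, fun t ht => ht.1.2⟩
    set q := sSup Sq with hq
    have hqmem : q ∈ Sq := hSqcl.csSup_mem hSqne hSqbdd
    have hap : a ≤ p := hpmem.1.1
    have hptstar : p ≤ tstar := hpmem.1.2
    have htstarq : tstar ≤ q := hqmem.1.1
    have hqb : q ≤ b := hqmem.1.2
    have hneg1 : ∀ t ∈ Ico a p, f t - c * g t ≤ 0 := by
      intro t ht
      have ht' : t ∈ Icc a b := ⟨ht.1, by linarith [ht.2]⟩
      have : ¬ (c ≤ f t / g t) := by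
        intro hcle
        exact absurd (csInf_le hSpbdd ⟨⟨ht.1, by linarith [ht.2]⟩, hcle⟩) (not_le.mpr ht.2)
      push_neg at this
      have := (div_lt_iff₀ (hgpos t ht')).mp this
      linarith
    have hmid : ∀ t ∈ Icc p q, 0 ≤ f t - c * g t := by
      intro t ht
      have ht' : t ∈ Icc a b := ⟨by linarith [ht.1], by linarith [ht.2]⟩
      have hrt : c ≤ f t / g t := by
        rcases le_or_gt t tstar with h | h
        · calc c ≤ f p / g p := hpmem.2
            _ ≤ f t / g t := hinc.monotoneOn ⟨hap, hptstar⟩ ⟨by linarith [ht.1], h⟩ ht.1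
        · calc c ≤ f q / g q := hqmem.2
            _ ≤ f t / g t := hdec.antitoneOn ⟨h.le, ht'.2⟩ ⟨htstarq, hqb⟩ ht.2
      have := (le_div_iff₀ (hgpos t ht')).mp hrt
      linarith
    have hneg2 : ∀ t ∈ Ioc q b, f t - c * g t ≤ 0 := by
      intro t ht
      have ht' : t ∈ Icc a b := ⟨by linarith [ht.1], ht.2⟩
      have : ¬ (c ≤ f t / g t) := by
        intro hcle
        exact absurd (le_csSup hSqbdd ⟨⟨by linarith [ht.1], ht.2⟩, hcle⟩) (not_le.mpr ht.1)
      push_neg at this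
      have := (div_lt_iff₀ (hgpos t ht')).mp this
      linarith
    have hkey := key_lemma a b hab' (fun t => f t - c * g t) hhc p q hap
      (le_trans hptstar htstarq) hqb hneg1 hmid hneg2 x1 x2 x3 h12 h23 s1 s3
    rw [hψ x2] at hkey
    have := (lt_div_iff₀ (hGpos x2)).mpr (by linarith : c * G x2 < F x2)
    linarith

lemma lap_sub' (a b c x : ℝ) (hab : a ≤ b) (g f : ℝ → ℝ)
    (hg : ContinuousOn g (Icc a b)) (hf : ContinuousOn f (Icc a b)) :
    (∫ t in a..b, (c * g t - f t) * Real.exp (-x*t))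
      = c * (∫ t in a..b, g t * Real.exp (-x*t)) - ∫ t in a..b, f t * Real.exp (-x*t) := by
  rw [intervalIntegral.integral_congr
      (g := fun t => c * (g t * Real.exp (-x*t)) - f t * Real.exp (-x*t)) (fun t _ => by ring),
    intervalIntegral.integral_sub ((lap_integrable a b hab g hg x).const_mul c)
      (lap_integrable a b hab f hf x),
    intervalIntegral.integral_const_mul]

theorem stmt_2 (a b : ℝ) (ha : 0 < a) (hab : a < b)
    (f g : ℝ → ℝ)
    (hf : ContinuousOn f (Icc a b)) (hg : ContinuousOn g (Icc a b))
    (hgpos : ∀ t ∈ Icc a b, 0 < g t)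
    (F G : ℝ → ℝ)
    (hF : ∀ x, F x = ∫ t in a..b, f t * Real.exp (-x * t))
    (hG : ∀ x, G x = ∫ t in a..b, g t * Real.exp (-x * t))
    (tstar : ℝ) (htstar : tstar ∈ Ioo a b)
    (hinc : StrictMonoOn (fun t => f t / g t) (Icc a tstar))
    (hdec : StrictAntiOn (fun t => f t / g t) (Icc tstar b))
    (L : ℝ) (hLneg : L < 0)
    (hL : Tendsto (fun x => deriv F x / deriv G x * G x - F x)
      (𝓝[>] (0 : ℝ)) (𝓝 L)) :
    ∃ xstar > (0 : ℝ), MonotoneOn (fun x => F x / G x) (Ioo 0 xstar) ∧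
      AntitoneOn (fun x => F x / G x) (Ioi xstar) := by
  have hab' : a ≤ b := hab.le
  have hGpos : ∀ x, 0 < G x := by
    intro x
    rw [hG]
    exact intervalIntegral.intervalIntegral_pos_of_pos_on
      (lap_integrable a b hab' g hg x)
      (fun t ht => mul_pos (hgpos t (Ioo_subset_Icc_self ht)) (Real.exp_pos _)) hab
  have hFd : ∀ x, HasDerivAt F (∫ t in a..b, (-t * f t) * Real.exp (-x*t)) x := by
    intro x
    have := lap_hasDerivAt a b hab' f hf x
    simp only [← hF] at this
    exact this
  have hGd : ∀ x, HasDerivAt G (∫ t in a..b, (-t * g t) * Real.exp (-x*t)) x := by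
    intro x
    have := lap_hasDerivAt a b hab' g hg x
    simp only [← hG] at this
    exact this
  have hG'neg : ∀ x, deriv G x < 0 := by
    intro x
    rw [(hGd x).deriv]
    have hpos : 0 < ∫ t in a..b, (t * g t) * Real.exp (-x*t) :=
      intervalIntegral.intervalIntegral_pos_of_pos_on
        (lap_integrable a b hab' (fun t => t * g t)
          (continuous_id.continuousOn.mul hg) x)
        (fun t ht => mul_pos (mul_pos (lt_trans ha ht.1)
          (hgpos t (Ioo_subset_Icc_self ht))) (Real.exp_pos _)) hab
    have heq : (∫ t in a..b, (-t * g t) * Real.exp (-x*t))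
        = -∫ t in a..b, (t * g t) * Real.exp (-x*t) := by
      rw [← intervalIntegral.integral_neg]
      congr 1; funext t; ring
    rw [heq]; linarith
  have hQ : ∀ x1 x2 x3 : ℝ, x1 < x2 → x2 < x3 →
      min (F x1 / G x1) (F x3 / G x3) ≤ F x2 / G x2 :=
    fun x1 x2 x3 h12 h23 =>
      quasi a b ha hab f g hf hg hgpos F G hF hG hGpos tstar htstar hinc hdec x1 x2 x3 h12 h23
  -- C1 : somewhere an increase
  have hC1 : ∃ u, 0 < u ∧ ∃ v, u < v ∧ F u / G u < F v / G v := by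
    by_contra hcon
    push_neg at hcon
    have hHge : ∀ x ∈ Ioi (0:ℝ), 0 ≤ deriv F x / deriv G x * G x - F x := by
      intro x hx
      have hRd : HasDerivAt (fun y => F y / G y)
          ((deriv F x * G x - F x * deriv G x) / G x ^ 2) x := by
        have := (hFd x).div (hGd x) (hGpos x).ne'
        rwa [← (hFd x).deriv, ← (hGd x).deriv] at this
      have hd : (deriv F x * G x - F x * deriv G x) / G x ^ 2 ≤ 0 := by
        have htend := (hasDerivAt_iff_tendsto_slope.mp hRd).mono_left
          (nhdsWithin_mono x (fun y (hy : y ∈ Ioi x) => (ne_of_gt hy : y ≠ x)))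
        refine le_of_tendsto htend ?_
        refine eventually_nhdsWithin_of_forall (fun y hy => ?_)
        rw [slope_def_field]
        apply div_nonpos_of_nonpos_of_nonneg
        · have := hcon x hx y hy
          simp only [sub_nonpos]
          exact this
        · linarith [mem_Ioi.mp hy]
      have hnum : deriv F x * G x - F x * deriv G x ≤ 0 := by
        have hsq : 0 < G x ^ 2 := pow_pos (hGpos x) 2
        rcases div_nonpos_iff.mp hd with ⟨h1, h2⟩ | ⟨h1, h2⟩
        · linarith
        · exact h1
      have hHeq : deriv F x / deriv G x * G x - F x
          = (deriv F x * G x - F x * deriv G x) / deriv G x := by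
        field_simp [(hG'neg x).ne]
      rw [hHeq]
      exact div_nonneg_iff.mpr (Or.inr ⟨hnum, (hG'neg x).le⟩)
    have : (0:ℝ) ≤ L := ge_of_tendsto hL (eventually_nhdsWithin_of_forall hHge)
    linarith
  -- eventually F/G > f a / g a
  set ra := f a / g a with hra
  have hbfact : ∀ᶠ x in atTop, 0 < F x - ra * G x := by
    have hanz : a ∈ Icc a b := ⟨le_refl a, hab'⟩
    have hta : a < tstar := htstar.1
    have hnn : ∀ t ∈ Icc a (a + 2*(tstar - a)/3), 0 ≤ f t - ra * g t := by
      intro t ht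
      have htb : t ∈ Icc a b := ⟨ht.1, by linarith [ht.2, htstar.2]⟩
      have hmono := hinc.monotoneOn ⟨le_refl a, hta.le⟩
        (⟨ht.1, by linarith [ht.2]⟩ : t ∈ Icc a tstar) ht.1
      have := (le_div_iff₀ (hgpos t htb)).mp hmono
      linarith
    have hpos : ∀ t ∈ Icc (a + (tstar - a)/3) (a + 2*(tstar - a)/3), 0 < f t - ra * g t := by
      intro t ht
      have htb : t ∈ Icc a b := ⟨by linarith [ht.1], by linarith [ht.2, htstar.2]⟩
      have hmono := hinc ⟨le_refl a, hta.le⟩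
        (⟨by linarith [ht.1], by linarith [ht.2]⟩ : t ∈ Icc a tstar) (by linarith [ht.1])
      have := (lt_div_iff₀ (hgpos t htb)).mp hmono
      linarith
    have hev := evpos a b (a + (tstar - a)/3) (a + 2*(tstar - a)/3)
      (fun t => f t - ra * g t) (hf.sub (continuousOn_const.mul hg))
      (by linarith) (by linarith) (by linarith [htstar.2]) hnn hpos
    filter_upwards [hev] with x hx
    rwa [lap_sub a b ra x hab' f g hf hg, ← hF, ← hG] at hx
  -- drop beyond any point where F/G > ra
  have hdrop : ∀ X : ℝ, ra < F X / G X → ∃ v, X < v ∧ F v / G v < F X / G X := by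
    intro X hX
    set c := F X / G X with hc
    have hk'c : ContinuousOn (fun t => c * g t - f t) (Icc a b) :=
      (continuousOn_const.mul hg).sub hf
    have hanz : a ∈ Icc a b := ⟨le_refl a, hab'⟩
    have hk'a : 0 < c * g a - f a := by
      have := (div_lt_iff₀ (hgpos a hanz)).mp hX
      linarith
    have hcw : ContinuousWithinAt (fun t => c * g t - f t) (Icc a b) a :=
      hk'c.continuousWithinAt hanz
    have hev : ∀ᶠ t in 𝓝[Icc a b] a, 0 < c * g t - f t := by
      have := hcw (isOpen_Ioi.mem_nhds hk'a)
      exact this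
    have hev' : {t : ℝ | 0 < c * g t - f t} ∈ 𝓝[Icc a b] a := hev
    rw [mem_nhdsWithin] at hev'
    obtain ⟨U, hUopen, haU, hUsub⟩ := hev'
    obtain ⟨ε, hε, hball⟩ := Metric.isOpen_iff.mp hUopen a haU
    set d := min (a + ε/2) b with hd
    have had : a < d := lt_min (by linarith) hab
    have hdb : d ≤ b := min_le_right _ _
    have hposd : ∀ t ∈ Icc a d, 0 < c * g t - f t := by
      intro t ht
      have htb : t ∈ Icc a b := ⟨ht.1, le_trans ht.2 hdb⟩
      have htU : t ∈ U := by
        apply hball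
        rw [Metric.mem_ball, Real.dist_eq, abs_of_nonneg (by linarith [ht.1])]
        have := le_trans ht.2 (min_le_left _ _)
        linarith
      exact hUsub ⟨htU, htb⟩
    have hev2 := evpos a b a d (fun t => c * g t - f t) hk'c
      (le_refl a) had hdb (fun t ht => (hposd t ht).le) hposd
    obtain ⟨v, hv1, hv2⟩ := ((eventually_gt_atTop X).and hev2).exists
    refine ⟨v, hv1, ?_⟩
    rw [lap_sub' a b c v hab' g f hg hf, ← hF, ← hG] at hv2
    rw [div_lt_iff₀ (hGpos v)]
    linarith
  -- the set T of points with a later increase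
  obtain ⟨u, hu, v, huv, hRuv⟩ := hC1
  set T := {x : ℝ | 0 < x ∧ ∃ y, x < y ∧ F x / G x < F y / G y} with hT
  have hTu : u ∈ T := ⟨hu, v, huv, hRuv⟩
  have step : ∀ x1 x2 x y : ℝ, x1 < x2 → x2 < x → x < y →
      F x / G x < F y / G y → F x1 / G x1 ≤ F x2 / G x2 := by
    intro x1 x2 x y h12 h2x hxy hlt
    have q1 := hQ x2 x y h2x hxy
    have hle : F x2 / G x2 ≤ F x / G x := by
      rcases min_cases (F x2 / G x2) (F y / G y) with ⟨he, _⟩ | ⟨he, _⟩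
      · rw [he] at q1; exact q1
      · rw [he] at q1; linarith
    have q2 := hQ x1 x2 y h12 (lt_trans h2x hxy)
    rcases min_cases (F x1 / G x1) (F y / G y) with ⟨he, _⟩ | ⟨he, _⟩
    · rw [he] at q2; exact q2
    · rw [he] at q2; linarith
  have hTbdd : BddAbove T := by
    by_contra hnb
    rw [not_bddAbove_iff] at hnb
    obtain ⟨x₀, hx₀⟩ := eventually_atTop.mp hbfact
    set X := max x₀ 1 with hX
    have hraX : ra < F X / G X := by
      have h0 := hx₀ X (le_max_left _ _)
      rw [lt_div_iff₀ (hGpos X)]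
      linarith
    obtain ⟨w, hXw, hRw⟩ := hdrop X hraX
    obtain ⟨z, hzT, hzw⟩ := hnb w
    obtain ⟨hz0, y, hzy, hRzy⟩ := hzT
    have := step X w z y hXw hzw hzy hRzy
    linarith
  have hxs : 0 < sSup T := lt_of_lt_of_le hu (le_csSup hTbdd hTu)
  refine ⟨sSup T, hxs, ?_, ?_⟩
  · intro x1 hx1 x2 hx2 h12le
    rcases eq_or_lt_of_le h12le with rfl | h12
    · exact le_refl _
    obtain ⟨z, hzT, h2z⟩ := exists_lt_of_lt_csSup ⟨u, hTu⟩ hx2.2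
    obtain ⟨hz0, y, hzy, hRzy⟩ := hzT
    exact step x1 x2 z y h12 h2z hzy hRzy
  · intro x2 hx2 x3 hx3 h23le
    rcases eq_or_lt_of_le h23le with rfl | h23
    · exact le_refl _
    have hnot : x2 ∉ T := fun hmem => absurd (le_csSup hTbdd hmem) (not_le.mpr hx2)
    by_contra hgt
    push_neg at hgt
    exact hnot ⟨lt_trans hxs hx2, x3, h23, hgt⟩
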